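/- For every n ≥ 1, all x_1,…,x_n, and every permutation σ of {1,…,n}, the fixed-boundary colored partition function at t = 1 factorizes as Z̃^σ_n(x_1,…,x_n|1) = ∏_{i=1}^n h_{σ(i)−1}(x_{n−i+1}, x_{n−i+2}, …, x_n), where h_m is the complete homogeneous symmetric polynomial of degree m. -/

import Mathlib

open Finset

/-- `d(s_N, s_E)` = number of pairs `(i,j)` with `i < j`, `i ∈ s_E`, `j ∈ s_N ∪ s_E`. -/
def dNE {n : ℕ} (sN sE : Finset (Fin n)) : ℕ :=
  (Finset.univ.filter fun p : Fin n × Fin n => p.1 < p.2 ∧ p.1 ∈ sE ∧ p.2 ∈ sN ∪ sE).card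

/-- Colored vertex weight `w̃(s_W,s_S,s_N,s_E; x, t) = x^{|s_E|} t^{d(s_N,s_E)}` when the
configuration is admissible, and `0` otherwise. -/
def coloredVertexW {R : Type*} [CommRing R] {n : ℕ} (x t : R)
    (sW sS sN sE : Finset (Fin n)) : R :=
  if sS ∩ sW = ∅ ∧ sN ∩ sE = ∅ ∧ sN ∪ sE = sS ∪ sW then
    x ^ sE.card * t ^ dNE sN sE
  else 0

/-- Weight of a colored configuration on the `n × n` grid (rows bottom-to-top, row `i`
uses parameter `x i`). -/
def coloredConfigW {R : Type*} [CommRing R] {n : ℕ} (x : Fin n → R) (t : R)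
    (H : Fin n → Fin (n + 1) → Finset (Fin n))
    (V : Fin (n + 1) → Fin n → Finset (Fin n)) : R :=
  ∏ i : Fin n, ∏ j : Fin n,
    coloredVertexW (x i) t (H i j.castSucc) (V i.castSucc j) (V i.succ j) (H i j.succ)

/-- Fixed-boundary colored domain-wall partition function `Z̃^σ_n(x|t)`. -/
def coloredZperm {R : Type*} [CommRing R] (n : ℕ) (x : Fin n → R) (t : R)
    (σ : Equiv.Perm (Fin n)) : R :=
  ∑ c ∈ (Finset.univ : Finset ((Fin n → Fin (n + 1) → Finset (Fin n)) ×
        (Fin (n + 1) → Fin n → Finset (Fin n)))).filter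
      (fun c => (∀ i : Fin n, c.1 i 0 = {Fin.rev i}) ∧
        (∀ i : Fin n, c.1 i (Fin.last n) = ∅) ∧
        (∀ j : Fin n, c.2 0 j = ∅) ∧
        (∀ a : Fin n, c.2 (Fin.last n) (σ a) = {a})),
    coloredConfigW x t c.1 c.2

/-- The complete homogeneous symmetric polynomial of degree `m` in the variables
`v 0, …, v (k-1)`. -/
def hsym {R : Type*} [CommRing R] (m : ℕ) {k : ℕ} (v : Fin k → R) : R :=
  ∑ f ∈ (Finset.univ : Finset (Fin m → Fin k)).filter
      (fun f => ∀ a b : Fin m, a ≤ b → f a ≤ f b),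
    ∏ i, v (f i)

namespace CVM

lemma toNat_decide (P : Prop) [Decidable P] : (decide P).toNat = if P then 1 else 0 := by
  by_cases h : P <;> simp [h]

lemma bool_eq_decide_of_toNat (b : Bool) (P : Prop) [Decidable P]
    (h : b.toNat = if P then 1 else 0) : b = decide P := by
  by_cases hP : P <;> cases b <;> simp [hP] at h ⊢

def ok1 (w s nn e : Bool) : Bool :=
  (!(s && w)) && (!(nn && e)) && ((nn || e) == (s || w))

lemma ok1_iff (w s nn e : Bool) :
    ok1 w s nn e = true ↔
      (s.toNat + w.toNat = nn.toNat + e.toNat ∧ s.toNat + w.toNat ≤ 1) := by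
  revert w s nn e; decide

def w1 {R : Type*} [CommRing R] (x : R) (w s nn e : Bool) : R :=
  if ok1 w s nn e then x ^ e.toNat else 0

abbrev Conf1 (n : ℕ) := (Fin n → Fin (n+1) → Bool) × (Fin (n+1) → Fin n → Bool)

def W1 {R : Type*} [CommRing R] {n : ℕ} (x : Fin n → R) (y : Conf1 n) : R :=
  ∏ i : Fin n, ∏ j : Fin n,
    w1 (x i) (y.1 i j.castSucc) (y.2 i.castSucc j) (y.2 i.succ j) (y.1 i j.succ)

def BC1 {n : ℕ} (c m : Fin n) (y : Conf1 n) : Prop :=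
  (∀ i : Fin n, y.1 i 0 = decide (i = Fin.rev c)) ∧
  (∀ i : Fin n, y.1 i (Fin.last n) = false) ∧
  (∀ j : Fin n, y.2 0 j = false) ∧
  (∀ j : Fin n, y.2 (Fin.last n) j = decide (j = m))

instance {n : ℕ} (c m : Fin n) : DecidablePred (BC1 c m) := fun y => by
  unfold BC1; infer_instance

def OK1 {n : ℕ} (y : Conf1 n) : Prop :=
  ∀ (i j : Fin n),
    ok1 (y.1 i j.castSucc) (y.2 i.castSucc j) (y.2 i.succ j) (y.1 i j.succ) = true

instance {n : ℕ} : DecidablePred (OK1 (n := n)) := fun y => by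
  unfold OK1; infer_instance

/-- extension of `f` to `ℕ` by `K`. -/
def gext (m K : ℕ) (f : Fin m → Fin (K+1)) : ℕ → ℕ :=
  fun j => if hj : j < m then (f ⟨j, hj⟩ : ℕ) else K

/-- row of the `j`-th east step (`yv 0 = r` is the entry row). -/
def yv (r m K : ℕ) (f : Fin m → Fin (K+1)) : ℕ → ℕ :=
  fun j => if j = 0 then r else r + gext m K f (j - 1)

lemma gext_le (m K : ℕ) (f : Fin m → Fin (K+1)) (j : ℕ) : gext m K f j ≤ K := by
  unfold gext; split
  · exact Nat.lt_succ_iff.mp (Fin.is_lt _)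
  · exact le_rfl

lemma gext_mono (m K : ℕ) (f : Fin m → Fin (K+1))
    (hf : ∀ a b : Fin m, a ≤ b → f a ≤ f b) {a b : ℕ} (hab : a ≤ b) :
    gext m K f a ≤ gext m K f b := by
  unfold gext
  split <;> split
  · exact hf _ _ hab
  · exact Nat.lt_succ_iff.mp (Fin.is_lt _)
  · omega
  · exact le_rfl

lemma yv_zero (r m K : ℕ) (f : Fin m → Fin (K+1)) : yv r m K f 0 = r := rfl

lemma yv_ge (r m K : ℕ) (f : Fin m → Fin (K+1)) (j : ℕ) : r ≤ yv r m K f j := by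
  unfold yv; split <;> omega

lemma yv_le (r m K : ℕ) (f : Fin m → Fin (K+1)) (j : ℕ) : yv r m K f j ≤ r + K := by
  unfold yv; split
  · omega
  · exact Nat.add_le_add_left (gext_le _ _ _ _) _

lemma yv_mono (r m K : ℕ) (f : Fin m → Fin (K+1))
    (hf : ∀ a b : Fin m, a ≤ b → f a ≤ f b) {a b : ℕ} (hab : a ≤ b) :
    yv r m K f a ≤ yv r m K f b := by
  unfold yv
  split <;> split
  · omega
  · omega
  · omega
  · exact Nat.add_le_add_left (gext_mono m K f hf (by omega)) _

lemma yv_succ (r m K : ℕ) (f : Fin m → Fin (K+1)) (j : ℕ) (hj : j < m) :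
    yv r m K f (j + 1) = r + (f ⟨j, hj⟩ : ℕ) := by
  unfold yv gext
  simp [hj]

def build (n r m K : ℕ) (f : Fin m → Fin (K+1)) : Conf1 n :=
  (fun i j => decide ((j:ℕ) ≤ m ∧ (i:ℕ) = yv r m K f j),
   fun k j => decide ((j:ℕ) ≤ m ∧ yv r m K f (j:ℕ) < (k:ℕ) ∧
      ((j:ℕ) < m → (k:ℕ) ≤ yv r m K f ((j:ℕ)+1))))

lemma build_BC1 {n : ℕ} (c m : Fin n) (r K : ℕ) (hr : r = n - 1 - (c:ℕ)) (hK : K = (c:ℕ))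
    (f : Fin (m:ℕ) → Fin (K+1)) :
    BC1 c m (build n r (m:ℕ) K f) := by
  have hc : (c:ℕ) < n := c.isLt
  have hm : (m:ℕ) < n := m.isLt
  have hyle : ∀ t, yv r (m:ℕ) K f t ≤ r + K := fun t => yv_le _ _ _ _ _
  refine ⟨fun i => ?_, fun i => ?_, fun j => ?_, fun j => ?_⟩
  · show decide _ = decide _
    rw [decide_eq_decide]
    simp only [Fin.val_zero, yv_zero, Fin.ext_iff, Fin.val_rev]
    constructor
    · rintro ⟨-, h⟩; omega
    · intro h; exact ⟨by omega, by omega⟩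
  · show decide _ = false
    simp only [decide_eq_false_iff_not, Fin.val_last]
    rintro ⟨h, -⟩; omega
  · show decide _ = false
    simp only [decide_eq_false_iff_not, Fin.val_zero]
    exact decide_eq_false (by rintro ⟨-, h, -⟩; omega)
  · show decide _ = decide _
    rw [decide_eq_decide]
    simp only [Fin.val_last, Fin.ext_iff]
    constructor
    · rintro ⟨h1, h2, h3⟩
      by_contra hne
      have : (j:ℕ) < (m:ℕ) := by omega
      have := h3 this
      have := hyle ((j:ℕ)+1)
      omega
    · intro h
      refine ⟨by omega, by have := hyle (j:ℕ); omega, fun hlt => by omega⟩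

lemma build_OK1 {n : ℕ} (r m K : ℕ)
    (f : Fin m → Fin (K+1)) (hf : ∀ a b : Fin m, a ≤ b → f a ≤ f b) :
    OK1 (build n r m K f) := by
  intro i j
  rw [ok1_iff]
  have hmono : yv r m K f (j:ℕ) ≤ yv r m K f ((j:ℕ)+1) :=
    yv_mono r m K f hf (Nat.le_succ _)
  simp only [build, toNat_decide, Fin.coe_castSucc, Fin.val_succ]
  split_ifs <;> omega

lemma build_W1 {R : Type*} [CommRing R] {n : ℕ} (x : Fin n → R) (r m K : ℕ)
    (hrK : r + K + 1 = n) (hm : m < n)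
    (f : Fin m → Fin (K+1)) (hf : ∀ a b : Fin m, a ≤ b → f a ≤ f b) :
    W1 x (build n r m K f) =
      ∏ i : Fin m, x ⟨r + (f i : ℕ), by have := (f i).isLt; omega⟩ := by
  classical
  set xN : ℕ → R := fun t => if ht : t < n then x ⟨t, ht⟩ else 1 with hxN
  have hyvlt : ∀ t, yv r m K f t < n := fun t => by have := yv_le r m K f t; omega
  have step1 : W1 x (build n r m K f) =
      ∏ i : Fin n, ∏ j : Fin n,
        (x i) ^ ((build n r m K f).1 i j.succ).toNat := by
    unfold W1
    refine Finset.prod_congr rfl fun i _ => Finset.prod_congr rfl fun j _ => ?_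
    unfold w1
    rw [if_pos (build_OK1 r m K f hf i j)]
  rw [step1, Finset.prod_comm]
  have step2 : ∀ j : Fin n,
      (∏ i : Fin n, (x i) ^ ((build n r m K f).1 i j.succ).toNat) =
        (if (j:ℕ) + 1 ≤ m then xN (yv r m K f ((j:ℕ)+1)) else 1) := by
    intro j
    simp only [build, Fin.val_succ]
    by_cases hj : (j:ℕ) + 1 ≤ m
    · rw [if_pos hj]
      have heq : ∀ i : Fin n,
          (x i) ^ ((decide ((j:ℕ)+1 ≤ m ∧ (i:ℕ) = yv r m K f ((j:ℕ)+1))).toNat) =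
          (if i = (⟨yv r m K f ((j:ℕ)+1), hyvlt _⟩ : Fin n) then x i else 1) := by
        intro i
        rw [toNat_decide]
        by_cases hi : i = (⟨yv r m K f ((j:ℕ)+1), hyvlt _⟩ : Fin n)
        · rw [if_pos hi, if_pos ⟨hj, by rw [hi]⟩, pow_one]
        · rw [if_neg hi, if_neg, pow_zero]
          rintro ⟨-, h2⟩
          exact hi (Fin.ext h2)
      rw [Finset.prod_congr rfl (fun i _ => heq i), Finset.prod_ite_eq' Finset.univ]
      simp [hxN, hyvlt ((j:ℕ)+1)]
    · rw [if_neg hj]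
      refine Finset.prod_eq_one fun i _ => ?_
      rw [toNat_decide, if_neg (fun h => hj h.1), pow_zero]
  rw [Finset.prod_congr rfl (fun j _ => step2 j)]
  have step3 : (∏ j : Fin n, (if (j:ℕ) + 1 ≤ m then xN (yv r m K f ((j:ℕ)+1)) else 1)) =
      ∏ j ∈ Finset.range n, (if j + 1 ≤ m then xN (yv r m K f (j+1)) else 1) :=
    Fin.prod_univ_eq_prod_range (fun j => if j + 1 ≤ m then xN (yv r m K f (j+1)) else 1) n
  rw [step3]
  rw [← Finset.prod_subset (Finset.range_subset_range.2 (le_of_lt hm))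
    (fun j _ hj => by rw [if_neg]; simp only [Finset.mem_range] at hj; omega)]
  have step4 : (∏ j ∈ Finset.range m, (if j + 1 ≤ m then xN (yv r m K f (j+1)) else 1)) =
      ∏ j ∈ Finset.range m, xN (yv r m K f (j+1)) := by
    refine Finset.prod_congr rfl fun j hj => ?_
    simp only [Finset.mem_range] at hj
    rw [if_pos (by omega)]
  rw [step4, ← Fin.prod_univ_eq_prod_range (fun j => xN (yv r m K f (j+1))) m]
  refine Finset.prod_congr rfl fun j _ => ?_
  rw [yv_succ r m K f (j:ℕ) j.isLt, hxN]
  simp only []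
  rw [dif_pos (by have := (f j).isLt; omega)]

lemma exists_decide_of_sum {n : ℕ} (p : Fin n → Bool) (h : (∑ i, (p i).toNat) = 1) :
    ∃ a, ∀ i, p i = decide (i = a) := by
  classical
  have hsum : (∑ i : Fin n, (if p i = true then 1 else 0)) = (∑ i, (p i).toNat) :=
    Finset.sum_congr rfl (fun i _ => by cases hpi : p i <;> simp [hpi])
  have hcard : (Finset.univ.filter fun i => p i = true).card = 1 := by
    rw [Finset.card_filter, hsum, h]
  obtain ⟨a, ha⟩ := Finset.card_eq_one.mp hcard
  have hmem : ∀ i, (p i = true ↔ i = a) := by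
    intro i
    constructor
    · intro hp
      have : i ∈ ({a} : Finset (Fin n)) :=
        ha ▸ (Finset.mem_filter.mpr ⟨Finset.mem_univ _, hp⟩)
      simpa using this
    · intro hip
      have hpa : a ∈ Finset.univ.filter (fun x => p x = true) :=
        ha ▸ Finset.mem_singleton_self a
      rw [hip]
      exact (Finset.mem_filter.mp hpa).2
  refine ⟨a, fun i => ?_⟩
  cases hpi : p i
  · symm
    simp only [decide_eq_false_iff_not]
    intro hia
    rw [← hmem i, hpi] at hia
    cases hia
  · symm
    rw [decide_eq_true_eq]
    rw [← hmem i, hpi]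

lemma surj_build {n : ℕ} (c m : Fin n) (y : Conf1 n) (hbc : BC1 c m y) (hok : OK1 y) :
    ∃ f : Fin (m:ℕ) → Fin ((c:ℕ)+1), (∀ a b : Fin (m:ℕ), a ≤ b → f a ≤ f b) ∧
      build n (n-1-(c:ℕ)) (m:ℕ) (c:ℕ) f = y := by
  classical
  obtain ⟨h, v⟩ := y
  obtain ⟨bc1', bc2', bc3', bc4'⟩ := hbc
  have bc1 : ∀ i : Fin n, h i 0 = decide (i = Fin.rev c) := bc1'
  have bc2 : ∀ i : Fin n, h i (Fin.last n) = false := bc2'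
  have bc3 : ∀ j : Fin n, v 0 j = false := bc3'
  have bc4 : ∀ j : Fin n, v (Fin.last n) j = decide (j = m) := bc4'
  have hok' : ∀ (i j : Fin n),
      ok1 (h i j.castSucc) (v i.castSucc j) (v i.succ j) (h i j.succ) = true := hok
  clear bc1' bc2' bc3' bc4' hok
  have hc : (c:ℕ) < n := c.isLt
  have hm : (m:ℕ) < n := m.isLt
  set r : ℕ := n - 1 - (c:ℕ) with hr
  -- Column sums
  have colsum : ∀ j : Fin (n+1),
      (∑ i, (h i j).toNat) = if (j:ℕ) ≤ (m:ℕ) then 1 else 0 := by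
    intro j
    induction j using Fin.induction with
    | zero =>
      simp only [Fin.val_zero]
      simp only [Nat.zero_le, ↓reduceIte]
      have : ∀ i : Fin n, (h i 0).toNat = if i = Fin.rev c then 1 else 0 := by
        intro i; rw [bc1 i, toNat_decide]
      rw [Finset.sum_congr rfl fun i _ => this i]
      simp
    | succ j ih =>
      have key : (∑ i : Fin n, (v i.castSucc j).toNat) + (∑ i : Fin n, (h i j.castSucc).toNat)
          = (∑ i : Fin n, (v i.succ j).toNat) + (∑ i : Fin n, (h i j.succ).toNat) := by
        rw [← Finset.sum_add_distrib, ← Finset.sum_add_distrib]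
        exact Finset.sum_congr rfl fun i _ => ((ok1_iff _ _ _ _).1 (hok' i j)).1
      have tele : (∑ i : Fin n, (v i.castSucc j).toNat) + (v (Fin.last n) j).toNat
          = (v 0 j).toNat + ∑ i : Fin n, (v i.succ j).toNat := by
        rw [← Fin.sum_univ_castSucc (fun k => (v k j).toNat),
          Fin.sum_univ_succ (fun k => (v k j).toNat)]
      rw [bc3 j, bc4 j, toNat_decide, Bool.toNat_false] at tele
      simp only [Fin.coe_castSucc] at ih
      simp only [Fin.val_succ]
      simp only [Fin.ext_iff] at tele
      split_ifs at ih tele ⊢ <;> omega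
  -- unique row in each admissible column line
  have rowOf : ∀ j : Fin (n+1), ∃ a : Fin n,
      ∀ i, h i j = decide ((j:ℕ) ≤ (m:ℕ) ∧ i = a) := by
    intro j
    by_cases hj : (j:ℕ) ≤ (m:ℕ)
    · obtain ⟨a, ha⟩ := exists_decide_of_sum (fun i => h i j)
        (by rw [colsum j, if_pos hj])
      refine ⟨a, fun i => ?_⟩
      rw [ha i, decide_eq_decide]
      constructor
      · intro hia; exact ⟨hj, hia⟩
      · exact fun hp => hp.2
    · refine ⟨c, fun i => ?_⟩
      have hz : (∑ i, (h i j).toNat) = 0 := by rw [colsum j, if_neg hj]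
      have : (h i j).toNat = 0 :=
        (Finset.sum_eq_zero_iff.mp hz) i (Finset.mem_univ i)
      have hfalse : h i j = false := by cases hhe : h i j <;> simp [hhe] at this ⊢
      rw [hfalse, eq_comm, decide_eq_false_iff_not]
      rintro ⟨hle, -⟩; exact hj hle
  choose ρ hρ using rowOf
  have hρ0 : ρ 0 = Fin.rev c := by
    have h1 := hρ 0 (Fin.rev c)
    rw [bc1 (Fin.rev c)] at h1
    have h2 : (decide (Fin.rev c = Fin.rev c)) = true := by simp
    rw [h2, eq_comm, decide_eq_true_iff] at h1
    exact (h1.2).symm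
  -- vertical edges
  have Bv : ∀ (j : Fin n) (k : Fin (n+1)),
      ((v k j).toNat =
        if ((j:ℕ) ≤ (m:ℕ) ∧ (ρ j.castSucc : ℕ) < (k:ℕ) ∧
          ((j:ℕ) < (m:ℕ) → (k:ℕ) ≤ (ρ j.succ : ℕ))) then 1 else 0) ∧
      ((j:ℕ) < (m:ℕ) → (ρ j.succ : ℕ) < (ρ j.castSucc : ℕ) → (k:ℕ) ≤ (ρ j.succ : ℕ)) := by
    intro j k
    induction k using Fin.induction with
    | zero =>
      constructor
      · rw [bc3 j]
        rw [if_neg]; · rfl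
        rintro ⟨-, hlt, -⟩; simp at hlt
      · intro _ _; simp
    | succ i ih =>
      obtain ⟨ih1, ih2⟩ := ih
      have key := ((ok1_iff _ _ _ _).1 (hok' i j)).1
      have hv1 : (v i.succ j).toNat ≤ 1 := by cases (v i.succ j) <;> simp
      rw [hρ j.castSucc i, hρ j.succ i, toNat_decide, toNat_decide, ih1] at key
      simp only [Fin.coe_castSucc, Fin.val_succ, Fin.ext_iff] at key ih2 ⊢
      constructor
      · split_ifs at key ⊢ <;> omega
      · intro h1 h2
        split_ifs at key <;> omega
  -- monotonicity of ρ along columns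
  have hmono : ∀ j : Fin n, (j:ℕ) < (m:ℕ) → (ρ j.castSucc : ℕ) ≤ (ρ j.succ : ℕ) := by
    intro j hj
    by_contra hlt
    push_neg at hlt
    have := (Bv j (Fin.last n)).2 hj hlt
    have h2 : (ρ j.succ : ℕ) < n := (ρ j.succ).isLt
    simp only [Fin.val_last] at this
    omega
  -- package ρ as a function on ℕ
  set ρn : ℕ → ℕ := fun t => if ht : t < n + 1 then (ρ ⟨t, ht⟩ : ℕ) else 0 with hρn
  have hρnval : ∀ (t : ℕ) (ht : t < n+1), ρn t = (ρ ⟨t, ht⟩ : ℕ) := by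
    intro t ht
    simp only [hρn]
    rw [dif_pos ht]
  have hρcast : ∀ j : Fin n, (ρ j.castSucc : ℕ) = ρn (j:ℕ) := by
    intro j
    rw [hρnval (j:ℕ) (by omega)]
    exact congrArg (fun z => (ρ z : ℕ))
      (show j.castSucc = (⟨(j:ℕ), by omega⟩ : Fin (n+1)) from Fin.ext (by simp))
  have hρsucc : ∀ j : Fin n, (ρ j.succ : ℕ) = ρn ((j:ℕ)+1) := by
    intro j
    rw [hρnval ((j:ℕ)+1) (by have := j.isLt; omega)]
    exact congrArg (fun z => (ρ z : ℕ))
      (show j.succ = (⟨(j:ℕ)+1, by have := j.isLt; omega⟩ : Fin (n+1)) from Fin.ext (by simp))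
  have hρval : ∀ j : Fin (n+1), (ρ j : ℕ) = ρn (j:ℕ) := by
    intro j
    rw [hρnval (j:ℕ) j.isLt]
  have hstep : ∀ t, t < (m:ℕ) → ρn t ≤ ρn (t+1) := by
    intro t ht
    have h1 := hmono ⟨t, by omega⟩ (by simpa using ht)
    rwa [hρcast, hρsucc] at h1
  have hchain : ∀ d t, t + d ≤ (m:ℕ) → ρn t ≤ ρn (t + d) := by
    intro d
    induction d with
    | zero => intro t _; simp
    | succ d ihd =>
      intro t htd
      have h1 := ihd t (by omega)
      have h2 := hstep (t + d) (by omega)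
      have h3 : t + (d + 1) = (t + d) + 1 := rfl
      rw [h3]
      omega
  have hρn0 : ρn 0 = r := by
    have : ρn 0 = (ρ 0 : ℕ) := (hρval 0).symm
    rw [this, hρ0, Fin.val_rev, hr]
    omega
  have hge : ∀ t, t ≤ (m:ℕ) → r ≤ ρn t := by
    intro t ht
    have := hchain t 0 (by omega)
    simp only [Nat.zero_add] at this
    omega
  have hub : ∀ t, t ≤ (m:ℕ) → ρn t ≤ n - 1 := by
    intro t ht
    rw [hρn]
    simp only []
    rw [dif_pos (by omega)]
    have := (ρ ⟨t, by omega⟩).isLt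
    omega
  have hrK : r + (c:ℕ) = n - 1 := by omega
  -- the monotone function
  refine ⟨fun j => ⟨ρn ((j:ℕ)+1) - r, by
      have h1 := hub ((j:ℕ)+1) (by have := j.isLt; omega)
      omega⟩, ?_, ?_⟩
  · intro a b hab
    have h1 := hchain ((b:ℕ) - (a:ℕ)) ((a:ℕ)+1) (by have := b.isLt; omega)
    have h2 := hge ((a:ℕ)+1) (by have := a.isLt; omega)
    simp only [Fin.mk_le_mk]
    have : (a:ℕ) + 1 + ((b:ℕ) - (a:ℕ)) = (b:ℕ) + 1 := by
      have : (a:ℕ) ≤ (b:ℕ) := hab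
      omega
    rw [this] at h1
    omega
  · -- build = y
    set f : Fin (m:ℕ) → Fin ((c:ℕ)+1) := fun j => ⟨ρn ((j:ℕ)+1) - r, by
      have h1 := hub ((j:ℕ)+1) (by have := j.isLt; omega)
      omega⟩ with hf
    have hyv : ∀ t, t ≤ (m:ℕ) → yv r (m:ℕ) (c:ℕ) f t = ρn t := by
      intro t ht
      match t with
      | 0 => rw [yv_zero, hρn0]
      | Nat.succ s =>
        show yv r (m:ℕ) (c:ℕ) f (s+1) = ρn (s+1)
        rw [yv_succ r (m:ℕ) (c:ℕ) f s (by omega)]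
        have hfv : ((f ⟨s, by omega⟩ : Fin ((c:ℕ)+1)) : ℕ) = ρn (s+1) - r := rfl
        rw [hfv]
        have := hge (s+1) (by omega)
        omega
    refine Prod.ext ?_ ?_
    · funext i j
      show decide _ = h i j
      rw [hρ j i, decide_eq_decide]
      constructor
      · rintro ⟨h1, h2⟩
        refine ⟨h1, Fin.ext ?_⟩
        rw [h2, hyv _ h1, ← hρval j]
      · rintro ⟨h1, h2⟩
        refine ⟨h1, ?_⟩
        rw [hyv _ h1, ← hρval j, h2]
    · funext k j
      show decide _ = v k j
      have hb := (Bv j k).1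
      have hvk := bool_eq_decide_of_toNat (v k j) _ hb
      rw [hvk, decide_eq_decide]
      have hcs : (j:ℕ) ≤ (m:ℕ) → (ρ j.castSucc : ℕ) = yv r (m:ℕ) (c:ℕ) f (j:ℕ) := by
        intro hj; rw [hρcast, hyv _ hj]
      have hss : (j:ℕ) < (m:ℕ) → (ρ j.succ : ℕ) = yv r (m:ℕ) (c:ℕ) f ((j:ℕ)+1) := by
        intro hj; rw [hρsucc, hyv _ (by omega)]
      constructor
      · rintro ⟨h1, h2, h3⟩
        exact ⟨h1, by rw [hcs h1]; exact h2, fun hlt => by rw [hss hlt]; exact h3 hlt⟩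
      · rintro ⟨h1, h2, h3⟩
        exact ⟨h1, by rw [← hcs h1]; exact h2, fun hlt => by rw [← hss hlt]; exact h3 hlt⟩

lemma build_inj {n : ℕ} (r m K : ℕ) (hrK : r + K + 1 = n) (hm : m < n)
    (f f' : Fin m → Fin (K+1)) (hb : build n r m K f = build n r m K f') : f = f' := by
  funext j
  have hj1 : (j:ℕ) + 1 < n + 1 := by have := j.isLt; omega
  have hfj : r + (f j : ℕ) < n := by have := (f j).isLt; omega
  have key := congrFun (congrFun (congrArg Prod.fst hb) ⟨r + (f j : ℕ), hfj⟩)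
    (⟨(j:ℕ)+1, hj1⟩ : Fin (n+1))
  simp only [build] at key
  rw [decide_eq_decide] at key
  have hyv : yv r m K f ((j:ℕ)+1) = r + (f j : ℕ) := yv_succ r m K f (j:ℕ) j.isLt
  have hyv' : yv r m K f' ((j:ℕ)+1) = r + (f' j : ℕ) := yv_succ r m K f' (j:ℕ) j.isLt
  rw [hyv, hyv'] at key
  have := key.mp ⟨by have := j.isLt; omega, rfl⟩
  exact Fin.ext (by omega)

lemma single {R : Type*} [CommRing R] {n : ℕ} (x : Fin n → R) (c m : Fin n) :
    ∑ y ∈ Finset.univ.filter (BC1 c m), W1 x y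
      = ∑ f ∈ (Finset.univ : Finset (Fin (m:ℕ) → Fin ((c:ℕ)+1))).filter
            (fun f => ∀ a b, a ≤ b → f a ≤ f b),
          ∏ i : Fin (m:ℕ), x ⟨n - 1 - (c:ℕ) + ((f i : ℕ)),
            by have := c.isLt; have := (f i).isLt; omega⟩ := by
  classical
  have hc : (c:ℕ) < n := c.isLt
  have hm : (m:ℕ) < n := m.isLt
  have hrK : (n - 1 - (c:ℕ)) + (c:ℕ) + 1 = n := by omega
  have hzero : ∀ y ∈ Finset.univ.filter (BC1 c m), W1 x y ≠ 0 → OK1 y := by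
    intro y _ hW
    by_contra hno
    apply hW
    unfold OK1 at hno
    push_neg at hno
    obtain ⟨i, j, hij⟩ := hno
    refine Finset.prod_eq_zero (Finset.mem_univ i) ?_
    refine Finset.prod_eq_zero (Finset.mem_univ j) ?_
    unfold w1
    rw [if_neg hij]
  rw [← Finset.sum_filter_of_ne hzero]
  refine (Finset.sum_bij (fun f _ => build n (n - 1 - (c:ℕ)) (m:ℕ) (c:ℕ) f)
    ?_ ?_ ?_ ?_).symm
  · intro f hf
    simp only [Finset.mem_filter, Finset.mem_univ, true_and] at hf ⊢
    exact ⟨build_BC1 c m _ _ rfl rfl f, build_OK1 _ _ _ f hf⟩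
  · intro f1 h1 f2 h2 heq
    exact build_inj _ _ _ hrK hm f1 f2 heq
  · intro y hy
    simp only [Finset.mem_filter, Finset.mem_univ, true_and] at hy
    obtain ⟨f, hmono, hbuild⟩ := surj_build c m y hy.1 hy.2
    exact ⟨f, by simp only [Finset.mem_filter, Finset.mem_univ, true_and]; exact hmono,
      hbuild⟩
  · intro f hf
    simp only [Finset.mem_filter, Finset.mem_univ, true_and] at hf
    exact (build_W1 x _ _ _ hrK hm f hf).symm


lemma ok1_mem_iff (pw ps pn pe : Prop) [Decidable pw] [Decidable ps] [Decidable pn]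
    [Decidable pe] :
    ok1 (decide pw) (decide ps) (decide pn) (decide pe) = true ↔
      (¬(ps ∧ pw) ∧ ¬(pn ∧ pe) ∧ ((pn ∨ pe) ↔ (ps ∨ pw))) := by
  by_cases h1 : pw <;> by_cases h2 : ps <;> by_cases h3 : pn <;> by_cases h4 : pe <;>
    simp [ok1, h1, h2, h3, h4]

lemma vertexW_one {R : Type*} [CommRing R] {n : ℕ} (x : R) (sW sS sN sE : Finset (Fin n)) :
    coloredVertexW x 1 sW sS sN sE =
      ∏ c : Fin n, w1 x (decide (c ∈ sW)) (decide (c ∈ sS)) (decide (c ∈ sN))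
        (decide (c ∈ sE)) := by
  classical
  have hiff : (sS ∩ sW = ∅ ∧ sN ∩ sE = ∅ ∧ sN ∪ sE = sS ∪ sW) ↔
      (∀ c : Fin n, ok1 (decide (c ∈ sW)) (decide (c ∈ sS)) (decide (c ∈ sN))
        (decide (c ∈ sE)) = true) := by
    constructor
    · rintro ⟨g1, g2, g3⟩ c
      rw [ok1_mem_iff]
      refine ⟨?_, ?_, ?_⟩
      · rintro ⟨hs, hw⟩
        have : c ∈ sS ∩ sW := Finset.mem_inter.mpr ⟨hs, hw⟩
        rw [g1] at this
        exact absurd this (Finset.notMem_empty c)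
      · rintro ⟨hn, he⟩
        have : c ∈ sN ∩ sE := Finset.mem_inter.mpr ⟨hn, he⟩
        rw [g2] at this
        exact absurd this (Finset.notMem_empty c)
      · have := Finset.ext_iff.mp g3 c
        simpa [Finset.mem_union] using this
    · intro hall
      refine ⟨Finset.eq_empty_iff_forall_notMem.mpr fun c hc => ?_,
        Finset.eq_empty_iff_forall_notMem.mpr fun c hc => ?_,
        Finset.ext fun c => ?_⟩
      · rw [Finset.mem_inter] at hc
        exact ((ok1_mem_iff _ _ _ _).mp (hall c)).1 hc
      · rw [Finset.mem_inter] at hc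
        exact ((ok1_mem_iff _ _ _ _).mp (hall c)).2.1 hc
      · have := ((ok1_mem_iff _ _ _ _).mp (hall c)).2.2
        simpa [Finset.mem_union] using this
  by_cases hglob : (sS ∩ sW = ∅ ∧ sN ∩ sE = ∅ ∧ sN ∪ sE = sS ∪ sW)
  · rw [coloredVertexW, if_pos hglob, one_pow, mul_one]
    have hall := hiff.mp hglob
    have hcard : sE.card = ∑ c : Fin n, (decide (c ∈ sE)).toNat := by
      conv_lhs => rw [← Finset.filter_univ_mem sE]
      rw [Finset.card_filter]
      exact Finset.sum_congr rfl fun c _ => (toNat_decide _).symm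
    rw [hcard, ← Finset.prod_pow_eq_pow_sum]
    refine Finset.prod_congr rfl fun c _ => ?_
    rw [w1, if_pos (hall c)]
  · rw [coloredVertexW, if_neg hglob]
    have hex : ∃ c : Fin n, ¬ (ok1 (decide (c ∈ sW)) (decide (c ∈ sS)) (decide (c ∈ sN))
        (decide (c ∈ sE)) = true) := by
      by_contra hno
      push_neg at hno
      exact hglob (hiff.mpr hno)
    obtain ⟨c, hcok⟩ := hex
    symm
    refine Finset.prod_eq_zero (Finset.mem_univ c) ?_
    rw [w1, if_neg hcok]

def toB {n : ℕ} (H : Fin n → Fin (n+1) → Finset (Fin n))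
    (V : Fin (n+1) → Fin n → Finset (Fin n)) : Fin n → Conf1 n :=
  fun c => (fun i j => decide (c ∈ H i j), fun k j => decide (c ∈ V k j))

lemma configW_one {R : Type*} [CommRing R] {n : ℕ} (x : Fin n → R)
    (H : Fin n → Fin (n+1) → Finset (Fin n)) (V : Fin (n+1) → Fin n → Finset (Fin n)) :
    coloredConfigW x 1 H V = ∏ c : Fin n, W1 x (toB H V c) := by
  unfold coloredConfigW
  have step1 : ∀ i j : Fin n, coloredVertexW (x i) 1 (H i j.castSucc) (V i.castSucc j)
      (V i.succ j) (H i j.succ) =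
      ∏ c : Fin n, w1 (x i) (decide (c ∈ H i j.castSucc)) (decide (c ∈ V i.castSucc j))
        (decide (c ∈ V i.succ j)) (decide (c ∈ H i j.succ)) :=
    fun i j => vertexW_one (x i) _ _ _ _
  rw [Finset.prod_congr rfl fun i _ => Finset.prod_congr rfl fun j _ => step1 i j]
  rw [Finset.prod_congr rfl fun i (_ : i ∈ Finset.univ) => Finset.prod_comm]
  rw [Finset.prod_comm]
  rfl

lemma toB_BC1 {n : ℕ} (σ : Equiv.Perm (Fin n)) (H : Fin n → Fin (n+1) → Finset (Fin n))
    (V : Fin (n+1) → Fin n → Finset (Fin n))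
    (h1 : ∀ i : Fin n, H i 0 = {Fin.rev i}) (h2 : ∀ i : Fin n, H i (Fin.last n) = ∅)
    (h3 : ∀ j : Fin n, V 0 j = ∅) (h4 : ∀ a : Fin n, V (Fin.last n) (σ a) = {a})
    (c : Fin n) : BC1 c (σ c) (toB H V c) := by
  refine ⟨fun i => ?_, fun i => ?_, fun j => ?_, fun j => ?_⟩
  · show decide _ = decide _
    rw [h1 i, decide_eq_decide, Finset.mem_singleton]
    constructor
    · intro h; rw [h, Fin.rev_rev]
    · intro h; rw [h, Fin.rev_rev]
  · show decide _ = false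
    rw [h2 i]
    simp
  · show decide _ = false
    rw [h3 j]
    simp
  · show decide _ = decide _
    rw [decide_eq_decide]
    have ha := h4 (σ.symm j)
    rw [Equiv.apply_symm_apply] at ha
    rw [ha, Finset.mem_singleton]
    constructor
    · intro h; rw [h, Equiv.apply_symm_apply]
    · intro h; rw [h, Equiv.symm_apply_apply]

end CVM

open CVM in
/-- At `t = 1` the fixed-boundary colored partition function factorizes:
`Z̃^σ_n(x_1,…,x_n|1) = ∏_{i=1}^n h_{σ(i)−1}(x_{n−i+1},…,x_n)` (here color `c : Fin n`
corresponds to `i = c + 1`, and its factor involves the top `c + 1` variables). -/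
theorem coloredZperm_t_one {R : Type*} [CommRing R] (n : ℕ) (hn : 1 ≤ n) (x : Fin n → R)
    (σ : Equiv.Perm (Fin n)) :
    coloredZperm n x 1 σ =
      ∏ c : Fin n, hsym ((σ c : ℕ))
        (fun m : Fin ((c : ℕ) + 1) => x ⟨n - 1 - (c : ℕ) + (m : ℕ), by
          have hc := c.isLt; have hm := m.isLt; omega⟩) := by
  classical
  rw [coloredZperm]
  rw [Finset.sum_congr rfl (fun HV _ => configW_one x HV.1 HV.2)]
  rw [Finset.sum_nbij' (t := Fintype.piFinset (fun c : Fin n =>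
        Finset.univ.filter (BC1 c (σ c))))
      (g := fun gg : Fin n → Conf1 n => ∏ c : Fin n, W1 x (gg c))
      (i := fun HV => toB HV.1 HV.2)
      (j := fun g => (fun i j => Finset.univ.filter (fun c => (g c).1 i j),
        fun k j => Finset.univ.filter (fun c => (g c).2 k j)))
      ?hi ?hj ?hji ?hij ?hfg]
  case hi =>
    intro HV hHV
    rw [Finset.mem_filter] at hHV
    obtain ⟨-, g1, g2, g3, g4⟩ := hHV
    rw [Fintype.mem_piFinset]
    intro c
    rw [Finset.mem_filter]
    exact ⟨Finset.mem_univ _, toB_BC1 σ HV.1 HV.2 g1 g2 g3 g4 c⟩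
  case hj =>
    intro g hg
    rw [Fintype.mem_piFinset] at hg
    have hbc : ∀ c : Fin n, BC1 c (σ c) (g c) := by
      intro c
      have := hg c
      rw [Finset.mem_filter] at this
      exact this.2
    rw [Finset.mem_filter]
    refine ⟨Finset.mem_univ _, fun i => ?_, fun i => ?_, fun j => ?_, fun a => ?_⟩
    · ext c
      simp only [Finset.mem_filter, Finset.mem_univ, true_and, Finset.mem_singleton]
      rw [(hbc c).1 i, decide_eq_true_eq]
      constructor
      · intro h; rw [h, Fin.rev_rev]
      · intro h; rw [h, Fin.rev_rev]
    · ext c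
      simp only [Finset.mem_filter, Finset.mem_univ, true_and, Finset.notMem_empty,
        iff_false]
      rw [(hbc c).2.1 i]
      simp
    · ext c
      simp only [Finset.mem_filter, Finset.mem_univ, true_and, Finset.notMem_empty,
        iff_false]
      rw [(hbc c).2.2.1 j]
      simp
    · ext c
      simp only [Finset.mem_filter, Finset.mem_univ, true_and, Finset.mem_singleton]
      rw [(hbc c).2.2.2 (σ a), decide_eq_true_eq]
      constructor
      · intro h
        exact σ.injective h.symm
      · intro h; rw [h]
  case hji =>
    intro HV _
    refine Prod.ext ?_ ?_
    · funext i j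
      ext c
      simp [toB]
    · funext k j
      ext c
      simp [toB]
  case hij =>
    intro g _
    funext c
    refine Prod.ext ?_ ?_
    · funext i j
      simp [toB]
    · funext k j
      simp [toB]
  case hfg =>
    intro HV _
    rfl
  rw [← Finset.prod_univ_sum]
  refine Finset.prod_congr rfl fun c _ => ?_
  exact single x c (σ c)
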